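/- Suppose 0 < α < β ≤ 1 and φ : ℕ₊ → ℕ₊ is strictly increasing. If the set { n / φ(n)^α : n ∈ ℕ₊ } is bounded, then the β-density of the range of φ exists and equals 0. Consequently, if the α-density of the range of φ exists and is finite, then the β-density of the range of φ equals 0. -/

import Mathlib

/-- The `α`-density of a set `A` of positive integers is `d` if
`#(A ∩ [1,n]) / n^α → d` as `n → ∞` (here `n^α` is the real power `rpow`). -/
def HasAlphaDensity (α : ℝ) (A : Set ℕ+) (d : ℝ) : Prop :=
  Filter.Tendsto (fun n : ℕ+ => ((A ∩ Set.Iic n).ncard : ℝ) / (n : ℝ) ^ α)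
    Filter.atTop (nhds d)

open Filter Set

lemma pnat_cast_tendsto : Tendsto (fun n : ℕ+ => (n : ℝ)) atTop atTop := by
  have h1 : Tendsto (fun n : ℕ+ => (n : ℕ)) atTop atTop := by
    apply tendsto_atTop_atTop_of_monotone
    · intro a b hab; exact_mod_cast hab
    · intro b; exact ⟨⟨b+1, Nat.succ_pos b⟩, by simp⟩
  exact tendsto_natCast_atTop_atTop.comp h1

lemma pnat_rpow_tendsto {γ : ℝ} (hγ : γ < 0) :
    Tendsto (fun n : ℕ+ => (n : ℝ) ^ γ) atTop (nhds 0) := by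
  have := (tendsto_rpow_neg_atTop (y := -γ) (by linarith)).comp pnat_cast_tendsto
  simpa [Function.comp_def] using this

lemma card_bound (φ : ℕ+ → ℕ+) (hφ : Function.Injective φ) (n : ℕ+) (C : ℝ)
    (hC0 : 0 ≤ C) (h : ∀ k : ℕ+, φ k ≤ n → (k : ℝ) ≤ C) :
    ((Set.range φ ∩ Set.Iic n).ncard : ℝ) ≤ C + 1 := by
  have heq : Set.range φ ∩ Set.Iic n = φ '' (φ ⁻¹' Set.Iic n) := by
    rw [Set.image_preimage_eq_inter_range, Set.inter_comm]
  rw [heq, Set.ncard_image_of_injective _ hφ,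
    ← Set.ncard_image_of_injective _ (PNat.coe_injective)]
  have hsub : PNat.val '' (φ ⁻¹' Set.Iic n) ⊆ ↑(Finset.Icc 1 (⌊C⌋₊ + 1)) := by
    rintro _ ⟨k, hk, rfl⟩
    simp only [Finset.coe_Icc, Set.mem_Icc]
    refine ⟨k.one_le, ?_⟩
    have hkC : ((k:ℕ):ℝ) ≤ C := by exact_mod_cast h k hk
    have : (k:ℕ) ≤ ⌊C⌋₊ := Nat.le_floor hkC
    omega
  have hle := Set.ncard_le_ncard hsub (Finset.Icc 1 (⌊C⌋₊ + 1)).finite_toSet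
  rw [Set.ncard_coe_finset, Nat.card_Icc] at hle
  have hle2 : (PNat.val '' (φ ⁻¹' Set.Iic n)).ncard ≤ ⌊C⌋₊ + 1 := by omega
  calc ((PNat.val '' (φ ⁻¹' Set.Iic n)).ncard : ℝ) ≤ (⌊C⌋₊ : ℝ) + 1 := by
        exact_mod_cast hle2
    _ ≤ C + 1 := by linarith [Nat.floor_le hC0]

/-- suppose `0 < α < β ≤ 1` and `φ : ℕ₊ → ℕ₊` is strictly increasing.
If `{ n / φ(n)^α : n ∈ ℕ₊ }` is bounded, then the `β`-density of the range of `φ`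
exists and equals `0`.  Consequently, if the `α`-density of the range of `φ` exists
(and is finite), then the `β`-density of the range of `φ` equals `0`. -/
theorem stmt2 (α β : ℝ) (h0 : 0 < α) (hαβ : α < β) (hβ1 : β ≤ 1)
    (φ : ℕ+ → ℕ+) (hφ : StrictMono φ) :
    ((∃ M : ℝ, ∀ n : ℕ+, (n : ℝ) / (φ n : ℝ) ^ α ≤ M) →
        HasAlphaDensity β (Set.range φ) 0) ∧
    ((∃ d : ℝ, HasAlphaDensity α (Set.range φ) d) →
        HasAlphaDensity β (Set.range φ) 0) := by
  have hpos : ∀ n : ℕ+, (0:ℝ) < (n:ℝ) := fun n => by exact_mod_cast n.pos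
  have hγ : α - β < 0 := by linarith
  constructor
  · rintro ⟨M, hM⟩
    have hM0 : 0 < M := by
      have h1 := hM 1
      have hφ1 : (0:ℝ) < (φ 1 : ℝ) ^ α := Real.rpow_pos_of_pos (hpos _) α
      have : (0:ℝ) < (1:ℕ+) / (φ 1 : ℝ) ^ α := by positivity
      linarith
    have key : ∀ n : ℕ+, ((Set.range φ ∩ Set.Iic n).ncard : ℝ) ≤ M * (n:ℝ) ^ α + 1 := by
      intro n
      apply card_bound φ hφ.injective n _ (by positivity)
      intro k hk
      have h1 : (k:ℝ) ≤ M * (φ k : ℝ) ^ α := by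
        have := hM k
        have hφk : (0:ℝ) < (φ k : ℝ) ^ α := Real.rpow_pos_of_pos (hpos _) α
        rw [div_le_iff₀ hφk] at this
        exact this
      have h2 : (φ k : ℝ) ^ α ≤ (n:ℝ) ^ α := by
        apply Real.rpow_le_rpow (le_of_lt (hpos _)) _ h0.le
        exact_mod_cast hk
      nlinarith
    apply squeeze_zero (g := fun n : ℕ+ => M * (n:ℝ) ^ (α - β) + (n:ℝ) ^ (-β))
    · intro n
      have : (0:ℝ) < (n:ℝ) ^ β := Real.rpow_pos_of_pos (hpos n) β
      positivity
    · intro n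
      have hnβ : (0:ℝ) < (n:ℝ) ^ β := Real.rpow_pos_of_pos (hpos n) β
      rw [Real.rpow_sub (hpos n), Real.rpow_neg (hpos n).le]
      rw [div_le_iff₀ hnβ]
      have heq : (M * ((n:ℝ) ^ α / (n:ℝ) ^ β) + ((n:ℝ) ^ β)⁻¹) * (n:ℝ) ^ β
          = M * (n:ℝ) ^ α + 1 := by field_simp
      rw [heq]; exact key n
    · have t1 := (pnat_rpow_tendsto hγ).const_mul M
      have t2 := pnat_rpow_tendsto (show -β < 0 by linarith)
      simpa using t1.add t2
  · rintro ⟨d, hd⟩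
    have := hd.mul (pnat_rpow_tendsto hγ)
    rw [mul_zero] at this
    apply this.congr
    intro n
    have hnα : (0:ℝ) < (n:ℝ) ^ α := Real.rpow_pos_of_pos (hpos n) α
    rw [Real.rpow_sub (hpos n)]
    field_simp
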